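/- Let A ∈ ℝ^{M×N}, K ≥ 1, and let φ : ℝ^{N×K} → ℝ be continuous. Let 1 ≤ r' ≤ r ≤ min(s, K) with s ≤ N. Suppose φ(X + W) > φ(X) for every X ∈ Σ_{s,r} and every W ∈ ℝ^{N×K} with W ≠ 0 and AW = 0. Then for every X₀ ∈ Σ_{s,r'} and every W₀ ∈ ℝ^{N×K} with AW₀ = 0, one has φ(X₀ + W₀) ≥ φ(X₀). -/

import Mathlib

open Matrix

noncomputable section

/-- The set of indices of nonzero rows of a matrix. -/
def rowSupport {N K : ℕ} (X : Matrix (Fin N) (Fin K) ℝ) : Set (Fin N) := {i | X i ≠ 0}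

/-- `X` is `s`-row sparse: at most `s` of its rows are nonzero. -/
def RowSparse {N K : ℕ} (s : ℕ) (X : Matrix (Fin N) (Fin K) ℝ) : Prop :=
  (rowSupport X).ncard ≤ s

/-- `‖X‖₀`: the number of nonzero rows of `X`. -/
def rowL0 {N K : ℕ} (X : Matrix (Fin N) (Fin K) ℝ) : ℕ := (rowSupport X).ncard

/-- `Σ_{s,r}`: matrices in `ℝ^{N×K}` that are `s`-row sparse and have rank at least `r`. -/
def SigmaSR {N K : ℕ} (s r : ℕ) : Set (Matrix (Fin N) (Fin K) ℝ) :=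
  {X | RowSparse s X ∧ r ≤ X.rank}

/-- If a continuous functional `φ` satisfies `φ (X + W) > φ X` for all `X ∈ Σ_{s,r}` and
all nonzero `W` with `A * W = 0`, then `φ (X₀ + W₀) ≥ φ X₀` for all `X₀ ∈ Σ_{s,r'}`
(`r' ≤ r`) and all `W₀` with `A * W₀ = 0`. -/
theorem statement_10 {M N K : ℕ} (A : Matrix (Fin M) (Fin N) ℝ) (s r r' : ℕ)
    (φ : Matrix (Fin N) (Fin K) ℝ → ℝ) (hφ : Continuous φ)
    (hr'1 : 1 ≤ r') (hr'r : r' ≤ r) (hrs : r ≤ s) (hrK : r ≤ K) (hsN : s ≤ N)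
    (h : ∀ X ∈ SigmaSR (N := N) (K := K) s r, ∀ W : Matrix (Fin N) (Fin K) ℝ,
      W ≠ 0 → A * W = 0 → φ X < φ (X + W)) :
    ∀ X₀ ∈ SigmaSR (N := N) (K := K) s r', ∀ W₀ : Matrix (Fin N) (Fin K) ℝ,
      A * W₀ = 0 → φ X₀ ≤ φ (X₀ + W₀) := by
  classical
  intro X₀ hX₀ W₀ hAW₀
  by_cases hW : W₀ = 0
  · simp [hW]
  obtain ⟨hX₀sp, -⟩ := hX₀
  -- a superset `S` of the row support of `X₀` of cardinality `s`
  have hTcard : (rowSupport X₀).toFinset.card ≤ s := by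
    rwa [← Set.ncard_eq_toFinset_card']
  obtain ⟨S, hTS, hScard⟩ := Finset.exists_superset_card_eq hTcard (by simpa using hsN)
  -- `r` distinct indices inside `S`
  obtain ⟨S', hS'S, hS'card⟩ := Finset.exists_subset_card_eq (hScard ▸ hrs)
  set ι : Fin r → Fin N := fun j => S'.orderEmbOfFin hS'card j with hι
  have hιinj : Function.Injective ι := (S'.orderEmbOfFin hS'card).injective
  have hιS : ∀ j, ι j ∈ S := fun j => hS'S (S'.orderEmbOfFin_mem hS'card j)
  set c : Fin r → Fin K := Fin.castLE hrK with hc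
  have hcinj : Function.Injective c := Fin.castLE_injective hrK
  -- the perturbation matrix `E`
  set E : Matrix (Fin N) (Fin K) ℝ :=
    Matrix.of (fun i k => ∑ j : Fin r, if ι j = i ∧ c j = k then (1:ℝ) else 0) with hE
  -- selection matrices
  set P : Matrix (Fin r) (Fin N) ℝ := Matrix.of fun a i => if ι a = i then (1:ℝ) else 0 with hP
  set Q : Matrix (Fin K) (Fin r) ℝ := Matrix.of fun k b => if c b = k then (1:ℝ) else 0 with hQ
  have hPQ : ∀ Y : Matrix (Fin N) (Fin K) ℝ, P * Y * Q = Y.submatrix ι c := by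
    intro Y
    ext a b
    simp [hP, hQ, Matrix.mul_apply, Finset.sum_ite_eq, Finset.sum_ite_eq']
  -- `E` restricted to the chosen rows/columns is the identity
  have hEsub : E.submatrix ι c = (1 : Matrix (Fin r) (Fin r) ℝ) := by
    ext a b
    simp only [hE, Matrix.submatrix_apply, Matrix.of_apply, Matrix.one_apply,
      hιinj.eq_iff, hcinj.eq_iff]
    by_cases hab : a = b
    · subst hab; simp
    · simp only [hab, if_false]
      apply Finset.sum_eq_zero
      intro j _
      rcases eq_or_ne j a with rfl | hja
      · simp [hab]
      · simp [hja]
  set B : Matrix (Fin r) (Fin r) ℝ := X₀.submatrix ι c with hB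
  -- the determinant polynomial `det (t • 1 + B)`
  set p : Polynomial ℝ :=
    Matrix.det ((Polynomial.X : Polynomial ℝ) • (1 : Matrix (Fin r) (Fin r) (Polynomial ℝ))
      + B.map Polynomial.C) with hp
  have hplead : p.leadingCoeff = 1 := Polynomial.leadingCoeff_det_X_one_add_C B
  have hpne : p ≠ 0 := by
    intro h0
    rw [h0] at hplead
    simp at hplead
  have heval : ∀ t : ℝ, p.eval t
      = Matrix.det (t • (1 : Matrix (Fin r) (Fin r) ℝ) + B) := by
    intro t
    have h := RingHom.map_det (Polynomial.evalRingHom t)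
      ((Polynomial.X : Polynomial ℝ) • (1 : Matrix (Fin r) (Fin r) (Polynomial ℝ))
        + B.map Polynomial.C)
    simp only [Polynomial.coe_evalRingHom] at h
    rw [hp, h]
    congr 1
    ext i j
    by_cases hij : i = j <;> simp [Matrix.one_apply, hij]
  have hroots : {x : ℝ | p.IsRoot x}.Finite := Polynomial.finite_setOf_isRoot hpne
  -- choose the sequence of perturbation sizes
  have hseq : ∀ n : ℕ, ∃ t : ℝ, t ∈ Set.Ioo (0:ℝ) (1/(n+1)) ∧ ¬ p.IsRoot t := by
    intro n
    have hinf : (Set.Ioo (0:ℝ) (1/(n+1))).Infinite := Set.Ioo_infinite (by positivity)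
    obtain ⟨t, ht⟩ := (hinf.diff hroots).nonempty
    exact ⟨t, ht.1, ht.2⟩
  choose t ht hroot using hseq
  have htend : Filter.Tendsto t Filter.atTop (nhds 0) :=
    squeeze_zero (fun n => (ht n).1.le) (fun n => (ht n).2.le)
      tendsto_one_div_add_atTop_nhds_zero_nat
  -- the perturbed matrices lie in `Σ_{s,r}`
  have hmem : ∀ n : ℕ, X₀ + t n • E ∈ SigmaSR (N := N) (K := K) s r := by
    intro n
    constructor
    · -- sparsity
      have hsub : rowSupport (X₀ + t n • E) ⊆ (S : Set (Fin N)) := by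
        intro i hi
        by_contra hiS
        apply hi
        have hX0i : X₀ i = 0 := by
          by_contra hne
          exact hiS (hTS (by rw [Set.mem_toFinset]; exact hne))
        have hEi : E i = 0 := by
          funext k
          simp only [hE, Matrix.of_apply]
          apply Finset.sum_eq_zero
          intro j _
          have : ι j ≠ i := fun hji => hiS (hji ▸ hιS j)
          simp [this]
        show (X₀ + t n • E) i = 0
        funext k
        have h1 : X₀ i k = 0 := congrFun hX0i k
        have h2 : E i k = 0 := congrFun hEi k
        simp [h1, h2]
      calc (rowSupport (X₀ + t n • E)).ncard ≤ (S : Set (Fin N)).ncard :=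
            Set.ncard_le_ncard hsub S.finite_toSet
        _ = S.card := Set.ncard_coe_finset S
        _ = s := hScard
    · -- rank
      have hsubm : (X₀ + t n • E).submatrix ι c
          = t n • (1 : Matrix (Fin r) (Fin r) ℝ) + B := by
        have : (X₀ + t n • E).submatrix ι c = B + t n • E.submatrix ι c := by
          ext a b; simp [hB, Matrix.submatrix_apply]
        rw [this, hEsub, add_comm]
      have hdet : (t n • (1 : Matrix (Fin r) (Fin r) ℝ) + B).det ≠ 0 := by
        rw [← heval]
        exact hroot n
      have hunit : IsUnit (t n • (1 : Matrix (Fin r) (Fin r) ℝ) + B) :=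
        (Matrix.isUnit_iff_isUnit_det _).2 (isUnit_iff_ne_zero.2 hdet)
      have hrank : (t n • (1 : Matrix (Fin r) (Fin r) ℝ) + B).rank = r := by
        rw [Matrix.rank_of_isUnit _ hunit, Fintype.card_fin]
      calc r = ((X₀ + t n • E).submatrix ι c).rank := by rw [hsubm, hrank]
        _ = (P * (X₀ + t n • E) * Q).rank := by rw [hPQ]
        _ ≤ (P * (X₀ + t n • E)).rank := Matrix.rank_mul_le_left _ _
        _ ≤ (X₀ + t n • E).rank := Matrix.rank_mul_le_right _ _
  -- pass to the limit
  have hXn : Filter.Tendsto (fun n => X₀ + t n • E) Filter.atTop (nhds X₀) := by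
    have := Filter.Tendsto.const_add X₀ (htend.smul_const E)
    simpa using this
  have hXnW : Filter.Tendsto (fun n => X₀ + t n • E + W₀) Filter.atTop (nhds (X₀ + W₀)) :=
    hXn.add_const W₀
  exact le_of_tendsto_of_tendsto' ((hφ.tendsto X₀).comp hXn)
    ((hφ.tendsto (X₀ + W₀)).comp hXnW)
    (fun n => (h _ (hmem n) W₀ hW hAW₀).le)
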